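/- Let F be a free group and w a nontrivial element of F. Then w is not conjugate to w⁻¹ in F. -/

import Mathlib

namespace Stmt8
open FreeGroup List

set_option linter.unusedSectionVars false

variable {α : Type*} [DecidableEq α]

def Reduced (L : List (α × Bool)) : Prop :=
  List.Chain' (fun a b => b ≠ (a.1, !a.2)) L

lemma reduced_reduce (L : List (α × Bool)) : Reduced (reduce L) := by
  rw [Reduced, List.Chain', List.isChain_iff_getElem]
  intro i h
  by_contra hbad
  have h1 : i + 1 < (reduce L).length := by omega
  have h0 : i < (reduce L).length := by omega
  have hdec : reduce L = (reduce L).take i ++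
      (reduce L).get ⟨i, h0⟩ :: (((reduce L).get ⟨i, h0⟩).1, !((reduce L).get ⟨i, h0⟩).2)
        :: (reduce L).drop (i+2) := by
    conv_lhs => rw [← List.take_append_drop i (reduce L)]
    congr 1
    rw [← List.getElem_cons_drop h0]
    congr 1
    rw [List.get_eq_getElem, ← hbad, List.getElem_cons_drop]
  exact FreeGroup.reduce.not hdec

lemma Reduced.reduce_eq {L : List (α × Bool)} (h : Reduced L) : reduce L = L := by
  have hred : FreeGroup.Red L (reduce L) := FreeGroup.reduce.red
  rcases (Relation.ReflTransGen.cases_head hred) with heq | ⟨N, hstep, _⟩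
  · exact heq.symm
  · exfalso
    cases hstep with
    | @not L₁ L₂ x b =>
      have := (List.isChain_append.mp h).2.1
      rw [List.isChain_cons_cons] at this
      exact this.1 rfl

lemma Reduced.toWord_mk {L : List (α × Bool)} (h : Reduced L) : (FreeGroup.mk L).toWord = L := by
  rw [FreeGroup.toWord_mk, h.reduce_eq]

lemma reduced_toWord (w : FreeGroup α) : Reduced w.toWord := by
  rw [← FreeGroup.reduce_toWord]; exact reduced_reduce _

end Stmt8

namespace Stmt8
open FreeGroup List

variable {α : Type*} [DecidableEq α]

lemma invRev_append (L M : List (α × Bool)) :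
    FreeGroup.invRev (L ++ M) = FreeGroup.invRev M ++ FreeGroup.invRev L := by
  simp [FreeGroup.invRev]

lemma Reduced.invRev {L : List (α × Bool)} (h : Reduced L) : Reduced (FreeGroup.invRev L) := by
  rw [Reduced, List.Chain', FreeGroup.invRev, List.isChain_reverse, List.isChain_map]
  refine h.imp ?_
  rintro ⟨x, b⟩ ⟨y, c⟩ hne heq
  simp only [flip, Prod.mk.injEq] at heq
  exact hne (by rw [heq.1, heq.2, Bool.not_not])

/-- A nonempty reduced word is not equal to its formal inverse. -/
lemma Reduced.ne_invRev {L : List (α × Bool)} (h : Reduced L) (hne : L ≠ []) :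
    FreeGroup.invRev L ≠ L := by
  intro heq
  have hpos : 0 < L.length := List.length_pos_iff.mpr hne
  have key : ∀ i (hi : i < L.length) (hi' : L.length - 1 - i < L.length),
      L[i] = ((L[L.length - 1 - i]).1, !(L[L.length - 1 - i]).2) := by
    intro i hi hi'
    have e1 := List.getElem_of_eq heq.symm hi
    simpa [FreeGroup.invRev] using e1
  rcases Nat.even_or_odd L.length with he | ho
  · -- n even, n = 2m, m ≥ 1; adjacent pair at m-1, m violates chain'
    obtain ⟨m, hm⟩ := he
    have hm1 : 1 ≤ m := by omega
    have h1 : m < L.length := by omega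
    have h3 : L.length - 1 - m = m - 1 := by omega
    have := key m h1 (by omega)
    simp only [h3] at this
    have hch := List.isChain_iff_getElem.mp h (m-1) (by omega)
    simp only [show m - 1 + 1 = m from by omega] at hch
    exact hch this
  · obtain ⟨m, hm⟩ := ho
    have h1 : m < L.length := by omega
    have h3 : L.length - 1 - m = m := by omega
    have := key m h1 (by omega)
    simp only [h3] at this
    have := congrArg Prod.snd this
    simp at this

def CycRed (L : List (α × Bool)) : Prop := Reduced (L ++ L)

lemma CycRed.reduced {L : List (α × Bool)} (h : CycRed L) : Reduced L :=
  (List.isChain_append.mp h).1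

lemma CycRed.rotate_one {L : List (α × Bool)} (h : CycRed L) : CycRed (L.rotate 1) := by
  rcases eq_or_ne L [] with rfl | hne
  · simpa using h
  · have htriple : Reduced (L ++ L ++ L) := by
      rw [List.append_assoc, Reduced, List.Chain', List.isChain_append]
      refine ⟨h.reduced, h, ?_⟩
      have := (List.isChain_append.mp h).2.2
      intro x hx y hy
      refine this x hx y ?_
      rwa [List.head?_append_of_ne_nil _ hne] at hy
    obtain ⟨a, t, rfl⟩ := List.exists_cons_of_ne_nil hne
    rw [show (a :: t).rotate 1 = t ++ [a] by simp [List.rotate_cons_succ]]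
    refine htriple.infix ?_
    exact ⟨[a], t, by simp⟩

lemma CycRed.rotate {L : List (α × Bool)} (h : CycRed L) (k : ℕ) : CycRed (L.rotate k) := by
  induction k with
  | zero => simpa using h
  | succ k ih => rw [← List.rotate_rotate]; exact ih.rotate_one

lemma CycRed.invRev {L : List (α × Bool)} (h : CycRed L) : CycRed (FreeGroup.invRev L) := by
  rw [CycRed, ← invRev_append]
  exact Reduced.invRev h

end Stmt8

namespace Stmt8
open FreeGroup List

set_option linter.unusedSectionVars false

variable {α : Type*} [DecidableEq α]

lemma mk_step {L₁ L₂ : List (α × Bool)} (h : FreeGroup.Red.Step L₁ L₂) :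
    FreeGroup.mk L₁ = FreeGroup.mk L₂ := by
  rw [← FreeGroup.quot_mk_eq_mk, ← FreeGroup.quot_mk_eq_mk]
  exact Quot.sound h

lemma mk_conj (p : α × Bool) (w : FreeGroup α) :
    FreeGroup.mk [p] * w * (FreeGroup.mk [p])⁻¹ =
      FreeGroup.mk ([p] ++ w.toWord ++ [(p.1, !p.2)]) := by
  conv_lhs => rw [← FreeGroup.mk_toWord (x := w)]
  rw [FreeGroup.inv_mk, FreeGroup.mul_mk, FreeGroup.mul_mk]
  rfl

lemma norm_toWord (w : FreeGroup α) : FreeGroup.norm w = w.toWord.length := rfl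

/-- Main lemma: conjugating a cyclically reduced element either increases the norm
or produces (on reduced words) a rotation of the original word. -/
lemma main : ∀ n (c w : FreeGroup α), FreeGroup.norm c ≤ n → CycRed w.toWord →
    FreeGroup.norm w < FreeGroup.norm (c * w * c⁻¹) ∨
    ∃ k, (c * w * c⁻¹).toWord = w.toWord.rotate k := by
  intro n
  induction n with
  | zero =>
    intro c w hc _
    have : c = 1 := by
      rw [← FreeGroup.norm_eq_zero]; omega
    subst this
    exact Or.inr ⟨0, by simp⟩
  | succ n ih =>
    intro c w hc hcyc
    rcases c.toWord.eq_nil_or_concat with hC | ⟨D, ⟨x, b⟩, hC⟩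
    · have : c = 1 := FreeGroup.toWord_eq_nil_iff.mp hC
      subst this
      exact Or.inr ⟨0, by simp⟩
    · -- c = mk D * q with q = mk [(x,b)]
      simp only [List.concat_eq_append] at hC
      set q : FreeGroup α := FreeGroup.mk [(x, b)] with hq
      have hcsplit : c = FreeGroup.mk D * q := by
        conv_lhs => rw [← FreeGroup.mk_toWord (x := c), hC]
        rw [hq, FreeGroup.mul_mk]
      have hDlen : FreeGroup.norm (FreeGroup.mk D) ≤ n := by
        have h1 : FreeGroup.norm c = D.length + 1 := by
          rw [norm_toWord, hC]; simp
        have h2 := FreeGroup.norm_mk_le (L₁ := D)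
        omega
      set L := w.toWord with hLdef
      rcases eq_or_ne L [] with hLnil | hLne
      · have : w = 1 := FreeGroup.toWord_eq_nil_iff.mp hLnil
        subst this
        exact Or.inr ⟨0, by simp [hLnil]⟩
      -- helper: once we know q * w * q⁻¹ is a rotation, recurse
      have recurse : ∀ j : ℕ, (q * w * q⁻¹).toWord = L.rotate j →
          FreeGroup.norm w < FreeGroup.norm (c * w * c⁻¹) ∨
          ∃ k, (c * w * c⁻¹).toWord = w.toWord.rotate k := by
        intro j hrot
        have hmain : c * w * c⁻¹ = FreeGroup.mk D * (q * w * q⁻¹) * (FreeGroup.mk D)⁻¹ := by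
          rw [hcsplit]; group
        have hcyc' : CycRed (q * w * q⁻¹).toWord := by
          rw [hrot]; exact hcyc.rotate j
        have hnorm' : FreeGroup.norm (q * w * q⁻¹) = FreeGroup.norm w := by
          rw [norm_toWord, norm_toWord, hrot, List.length_rotate]
        rcases ih (FreeGroup.mk D) (q * w * q⁻¹) hDlen hcyc' with hlt | ⟨k, hk⟩
        · left; rw [hmain]; omega
        · right
          refine ⟨j + k, ?_⟩
          rw [hmain, hk, hrot, List.rotate_rotate]
      obtain ⟨hd, tl, hL1⟩ := List.exists_cons_of_ne_nil hLne
      rcases L.eq_nil_or_concat with h' | ⟨ini, lst, hL2⟩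
      · exact absurd h' hLne
      simp only [List.concat_eq_append] at hL2
      by_cases hhead : hd = (x, !b)
      · -- head cancellation
        subst hhead
        apply recurse 1
        have hqw : q * w * q⁻¹ = FreeGroup.mk (tl ++ [(x, !b)]) := by
          rw [hq, mk_conj, ← hLdef, hL1]
          refine Eq.trans (mk_step ?_) rfl
          have : (x, b) :: (x, !b) :: (tl ++ [(x, !b)]) =
              ([] : List (α × Bool)) ++ (x, b) :: (x, !b) :: (tl ++ [(x, !b)]) := rfl
          simpa using FreeGroup.Red.Step.cons_not (x := x) (b := b) (L := tl ++ [(x, !b)])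
        rw [hqw]
        have hrot1 : L.rotate 1 = tl ++ [(x, !b)] := by
          rw [hL1]; simp [List.rotate_cons_succ]
        rw [← hrot1]
        exact (hcyc.rotate 1).reduced.toWord_mk
      · by_cases hlast : lst = (x, b)
        · -- tail cancellation
          subst hlast
          apply recurse ini.length
          have hqw : q * w * q⁻¹ = FreeGroup.mk ((x, b) :: ini) := by
            rw [hq, mk_conj, ← hLdef, hL2]
            have hlist : [(x, b)] ++ (ini ++ [(x, b)]) ++ [((x, b).1, !(x, b).2)] =
                ((x, b) :: ini) ++ (x, b) :: (x, !b) :: [] := by simp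
            rw [hlist,
              mk_step (FreeGroup.Red.Step.not (L₁ := (x, b) :: ini) (L₂ := []) (x := x) (b := b))]
            simp
          rw [hqw]
          have hrot2 : L.rotate ini.length = (x, b) :: ini := by
            rw [hL2, List.rotate_eq_drop_append_take (by simp), List.drop_left, List.take_left]
            rfl
          rw [← hrot2]
          exact (hcyc.rotate ini.length).reduced.toWord_mk
        · -- no cancellation: norm strictly increases
          left
          have hCL : c * w * c⁻¹ = FreeGroup.mk (c.toWord ++ L ++ FreeGroup.invRev c.toWord) := by
            conv_lhs => rw [← FreeGroup.mk_toWord (x := c), ← FreeGroup.mk_toWord (x := w)]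
            rw [FreeGroup.inv_mk, FreeGroup.mul_mk, FreeGroup.mul_mk]
          have hredC : Reduced c.toWord := reduced_toWord c
          have hredbig : Reduced (c.toWord ++ L ++ FreeGroup.invRev c.toWord) := by
            rw [List.append_assoc, Reduced, List.Chain', List.isChain_append]
            refine ⟨hredC, ?_, ?_⟩
            · rw [List.isChain_append]
              refine ⟨hcyc.reduced, hredC.invRev, ?_⟩
              intro u hu v hv
              rw [hL2, List.getLast?_concat] at hu
              rw [hC, invRev_append] at hv
              simp only [FreeGroup.invRev, List.map_cons, List.map_nil,
                List.reverse_cons, List.reverse_nil] at hv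
              simp only [List.nil_append, List.cons_append, List.head?_cons,
                Option.mem_def, Option.some.injEq] at hv
              rw [Option.mem_def, Option.some.injEq] at hu
              subst hv; subst hu
              intro hbad
              apply hlast
              have h1 := congrArg Prod.fst hbad
              have h2 := congrArg Prod.snd hbad
              simp at h1 h2
              exact Prod.ext h1.symm (by simpa using h2.symm)
            · intro u hu v hv
              rw [hC, List.getLast?_concat, Option.mem_def, Option.some.injEq] at hu
              rw [List.head?_append_of_ne_nil _ hLne, hL1, List.head?_cons,
                Option.mem_def, Option.some.injEq] at hv
              subst hu; subst hv
              intro hbad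
              exact hhead hbad
          rw [hCL, norm_toWord, norm_toWord, hredbig.toWord_mk, ← hLdef]
          have : c.toWord.length = D.length + 1 := by rw [hC]; simp
          simp only [List.length_append, FreeGroup.invRev_length]
          omega

end Stmt8

namespace Stmt8
open FreeGroup List

set_option linter.unusedSectionVars false

variable {α : Type*} [DecidableEq α]

lemma descent : ∀ m (w c : FreeGroup α), FreeGroup.norm w ≤ m → w ≠ 1 →
    c * w * c⁻¹ = w⁻¹ → False := by
  intro m
  induction m with
  | zero =>
    intro w c hm hw _
    exact hw (by rw [← FreeGroup.norm_eq_zero]; omega)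
  | succ m ih =>
    intro w c hm hw hconj
    set L := w.toWord with hLdef
    have hred : Reduced L := reduced_toWord w
    have hLne : L ≠ [] := fun h => hw (FreeGroup.toWord_eq_nil_iff.mp h)
    by_cases hcyc : CycRed L
    · -- cyclically reduced case: use main lemma
      rcases main (FreeGroup.norm c) c w le_rfl hcyc with hlt | ⟨k, hk⟩
      · rw [hconj, FreeGroup.norm_inv_eq] at hlt; omega
      · rw [hconj, FreeGroup.toWord_inv] at hk
        have hpos : 0 < L.length := List.length_pos_iff.mpr hLne
        set k' := k % L.length with hk'def
        have hk'lt : k' < L.length := Nat.mod_lt _ hpos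
        have hrot : FreeGroup.invRev L = L.rotate k' := by
          rw [hk'def, List.rotate_mod]; exact hk
        rw [List.rotate_eq_drop_append_take (le_of_lt hk'lt)] at hrot
        have hsplit : FreeGroup.invRev L =
            FreeGroup.invRev (L.drop k') ++ FreeGroup.invRev (L.take k') := by
          conv_lhs => rw [← List.take_append_drop k' L]
          rw [invRev_append]
        rw [hsplit] at hrot
        have hlen : (FreeGroup.invRev (L.drop k')).length = (L.drop k').length :=
          FreeGroup.invRev_length
        obtain ⟨h1, -⟩ := List.append_inj hrot hlen
        have hdropne : L.drop k' ≠ [] := by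
          intro h
          have := congrArg List.length h
          simp at this
          omega
        have hdropred : Reduced (L.drop k') :=
          hred.infix (L.drop_suffix k').isInfix
        exact hdropred.ne_invRev hdropne h1
    · -- not cyclically reduced: peel off a letter and recurse
      rw [CycRed, Reduced, List.Chain', List.isChain_append] at hcyc
      push_neg at hcyc
      obtain ⟨u, hu, v0, hv, huv⟩ := hcyc hred hred
      obtain ⟨hd, tl, hL1⟩ := List.exists_cons_of_ne_nil hLne
      rcases L.eq_nil_or_concat with h' | ⟨ini, lst, hL2⟩
      · exact absurd h' hLne
      simp only [List.concat_eq_append] at hL2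
      rw [hL2, List.getLast?_concat, Option.mem_def, Option.some.injEq] at hu
      rw [hL1, List.head?_cons, Option.mem_def, Option.some.injEq] at hv
      subst hu hv
      -- now huv : hd = (lst.1, !lst.2)
      have hlst : lst = (hd.1, !hd.2) := by
        have h1 := congrArg Prod.fst huv
        have h2 := congrArg Prod.snd huv
        simp only at h1 h2
        refine Prod.ext h1.symm ?_
        rw [h2, Bool.not_not]
      rcases ini with _ | ⟨a0, mid⟩
      · -- L = [lst] and L = hd :: tl force hd = lst, contradiction with huv
        rw [hL2] at hL1
        simp only [List.nil_append, List.cons.injEq] at hL1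
        rw [← hL1.1] at hlst
        have := congrArg Prod.snd hlst
        simp at this
      · -- L = hd :: mid ++ [lst]
        rw [hL2] at hL1
        simp only [List.cons_append, List.cons.injEq] at hL1
        have hLfull : L = [hd] ++ mid ++ [(hd.1, !hd.2)] := by
          rw [hL2, hL1.1, hlst]
          simp
        have hmidne : mid ≠ [] := by
          rintro rfl
          rw [hLfull] at hred
          simp only [List.nil_append, List.singleton_append, Reduced, List.Chain',
            List.isChain_cons_cons] at hred
          exact hred.1 rfl
        have hmidred : Reduced mid :=
          hred.infix (by rw [hLfull]; exact ⟨[hd], [(hd.1, !hd.2)], by simp⟩)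
        set a : FreeGroup α := FreeGroup.mk [hd] with ha
        set v : FreeGroup α := FreeGroup.mk mid with hv
        have hainv : a⁻¹ = FreeGroup.mk [(hd.1, !hd.2)] := by
          rw [ha, FreeGroup.inv_mk]; rfl
        have hw_eq : w = a * v * a⁻¹ := by
          conv_lhs => rw [← FreeGroup.mk_toWord (x := w), ← hLdef, hLfull]
          rw [hainv, ha, hv, FreeGroup.mul_mk, FreeGroup.mul_mk]
        have hvne : v ≠ 1 := by
          intro h
          apply hmidne
          rw [← hmidred.toWord_mk, ← hv, h, FreeGroup.toWord_one]
        have hnormv : FreeGroup.norm v ≤ m := by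
          have h1 : FreeGroup.norm v = mid.length := by
            rw [norm_toWord, hv, hmidred.toWord_mk]
          have h2 : FreeGroup.norm w = L.length := norm_toWord w
          have h3 : L.length = mid.length + 2 := by rw [hLfull]; simp
          omega
        refine ih v (a⁻¹ * c * a) hnormv hvne ?_
        have step1 : (a⁻¹ * c * a) * v * (a⁻¹ * c * a)⁻¹ = a⁻¹ * (c * w * c⁻¹) * a := by
          rw [hw_eq]; group
        rw [step1, hconj, hw_eq]
        group

theorem stmt8_aux (w : FreeGroup α) (hw : w ≠ 1) : ¬ IsConj w w⁻¹ := by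
  intro h
  obtain ⟨c, hc⟩ := isConj_iff.mp h
  exact descent (FreeGroup.norm w) w c le_rfl hw hc

end Stmt8

/-- In a free group, a nontrivial element is not conjugate to its inverse. -/
theorem stmt8 {X : Type*} (w : FreeGroup X) (hw : w ≠ 1) : ¬ IsConj w w⁻¹ := by
  have := Classical.decEq X
  exact Stmt8.stmt8_aux w hw
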